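/- Let n ≥ 1, let g : Fin n → ℝ, and for each m ∈ (0,1) let e(m) ∈ ℝ be a global minimizer over ℝ of the expectile loss L_m(x) = ∑_{i} w_i(x)·(g_i − x)², where w_i(x) = 1−m if g_i − x < 0 and w_i(x) = m otherwise. Then e(m) tends to max_{i} g_i as m tends to 1 from the left, i.e. Tendsto e (𝓝[<] 1) (𝓝 (max_i g_i)). -/
import Mathlib


open Finset Filter Topology

/-- The m-expectile of a finite sample converges to the sample maximum as m → 1⁻. -/
theorem expectile_tendsto_max (n : ℕ) (hn : 1 ≤ n) (g : Fin n → ℝ) (e : ℝ → ℝ)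
    (he : ∀ m ∈ Set.Ioo (0 : ℝ) 1, ∀ x : ℝ,
      (∑ i, (if g i - e m < 0 then 1 - m else m) * (g i - e m) ^ 2) ≤
        ∑ i, (if g i - x < 0 then 1 - m else m) * (g i - x) ^ 2) :
    Tendsto e (nhdsWithin 1 (Set.Iio 1))
      (nhds (Finset.univ.sup' (Finset.univ_nonempty_iff.mpr (Fin.pos_iff_nonempty.mp hn)) g)) := by
  have hne : (Finset.univ : Finset (Fin n)).Nonempty :=
    Finset.univ_nonempty_iff.mpr (Fin.pos_iff_nonempty.mp hn)
  set M := Finset.univ.sup' hne g with hM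
  have hle : ∀ i, g i ≤ M := fun i => Finset.le_sup' g (Finset.mem_univ i)
  obtain ⟨j, -, hj⟩ := Finset.exists_mem_eq_sup' hne g
  set C := ∑ i, (g i - M) ^ 2 with hC
  have hC0 : 0 ≤ C := Finset.sum_nonneg fun i _ => sq_nonneg _
  -- upper bound on loss at M
  have lossM : ∀ m : ℝ, m ∈ Set.Ioo (0:ℝ) 1 →
      (∑ i, (if g i - M < 0 then 1 - m else m) * (g i - M) ^ 2) ≤ (1 - m) * C := by
    intro m hm
    rw [hC, Finset.mul_sum]
    apply Finset.sum_le_sum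
    intro i _
    by_cases h : g i - M < 0
    · simp [h]
    · have : g i - M = 0 := le_antisymm (by linarith [hle i]) (not_lt.mp h)
      simp [h, this]
  -- e m ≤ M
  have hub : ∀ m : ℝ, m ∈ Set.Ioo (0:ℝ) 1 → e m ≤ M := by
    intro m hm
    by_contra h
    push_neg at h
    have key := he m hm M
    have hlt : (∑ i, (if g i - M < 0 then 1 - m else m) * (g i - M) ^ 2) <
        ∑ i, (if g i - e m < 0 then 1 - m else m) * (g i - e m) ^ 2 := by
      apply Finset.sum_lt_sum_of_nonempty hne
      intro i _
      have h1 : g i - e m < 0 := by linarith [hle i]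
      have h2 : (g i - M) ^ 2 < (g i - e m) ^ 2 := by
        have := hle i; nlinarith
      by_cases h3 : g i - M < 0
      · simp only [h1, h3, if_true]
        exact mul_lt_mul_of_pos_left h2 (by linarith [hm.2])
      · have : g i - M = 0 := le_antisymm (by linarith [hle i]) (not_lt.mp h3)
        simp only [h1, h3, if_true, if_false, this]
        nlinarith [hm.2, sq_nonneg (g i - e m)]
    linarith
  -- key inequality
  have hkey : ∀ m : ℝ, m ∈ Set.Ioo (0:ℝ) 1 → m * (M - e m) ^ 2 ≤ (1 - m) * C := by
    intro m hm
    have key := he m hm M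
    have hlo : m * (M - e m) ^ 2 ≤
        ∑ i, (if g i - e m < 0 then 1 - m else m) * (g i - e m) ^ 2 := by
      have hterm : m * (M - e m) ^ 2 =
          (if g j - e m < 0 then 1 - m else m) * (g j - e m) ^ 2 := by
        have h0 : ¬ (g j - e m < 0) := by
          have h4 := hub m hm; have h5 : g j = M := hj.symm; push_neg; linarith
        rw [if_neg h0, hj.symm]
      rw [hterm]
      apply Finset.single_le_sum (f := fun i => (if g i - e m < 0 then 1 - m else m) * (g i - e m) ^ 2)
        (fun i _ => ?_) (Finset.mem_univ j)
      have : (0:ℝ) ≤ (if g i - e m < 0 then 1 - m else m) := by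
        split <;> linarith [hm.1, hm.2]
      positivity
    exact hlo.trans (key.trans (lossM m hm))
  -- squeeze
  have hev : ∀ᶠ m in nhdsWithin (1:ℝ) (Set.Iio 1), m ∈ Set.Ioo (1/2 : ℝ) 1 :=
    eventually_of_mem (Ioo_mem_nhdsLT_of_mem (by norm_num : (1:ℝ) ∈ Set.Ioc (1/2) 1))
      (fun x hx => hx)
  have hlow : ∀ᶠ m in nhdsWithin (1:ℝ) (Set.Iio 1),
      M - Real.sqrt (2 * (1 - m) * C) ≤ e m := by
    filter_upwards [hev] with m hm
    have hm' : m ∈ Set.Ioo (0:ℝ) 1 := ⟨by linarith [hm.1], hm.2⟩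
    have h1 := hkey m hm'
    have h2 : (M - e m) ^ 2 ≤ 2 * (1 - m) * C := by nlinarith [hm.1, sq_nonneg (M - e m)]
    have h3 : M - e m ≤ Real.sqrt (2 * (1 - m) * C) := by
      have := Real.sqrt_le_sqrt h2
      rwa [Real.sqrt_sq_eq_abs, abs_of_nonneg (by linarith [hub m hm'])] at this
    linarith
  have hhigh : ∀ᶠ m in nhdsWithin (1:ℝ) (Set.Iio 1), e m ≤ M := by
    filter_upwards [hev] with m hm
    exact hub m ⟨by linarith [hm.1], hm.2⟩
  have htlow : Tendsto (fun m : ℝ => M - Real.sqrt (2 * (1 - m) * C))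
      (nhdsWithin 1 (Set.Iio 1)) (nhds M) := by
    have hcont : Continuous (fun m : ℝ => M - Real.sqrt (2 * (1 - m) * C)) := by
      continuity
    have h := (hcont.tendsto 1).mono_left (nhdsWithin_le_nhds (s := Set.Iio (1:ℝ)))
    simpa using h
  exact tendsto_of_tendsto_of_tendsto_of_le_of_le' htlow tendsto_const_nhds hlow hhigh
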